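/- arXiv:1312.7838 — 4 statements merged into one kernel-verified Lean document; each statement's English description precedes it below -/
import Mathlib

section
/- For all natural numbers m and n, the integral over [-1,1] of P_m(x) * P_n(x) dx equals (2/(2n+1)) * δ_{m,n}, where δ_{m,n} is the Kronecker delta. -/
open Polynomial intervalIntegral

/-- The Legendre polynomial, defined by Rodrigues' formula
`P_n(x) = (1/(n! * 2^n)) * dⁿ/dxⁿ [(x² - 1)ⁿ]`. -/
noncomputable def legendre (n : ℕ) : Polynomial ℝ :=
  Polynomial.C (1 / (n.factorial * 2 ^ n : ℝ)) *
    (Polynomial.derivative^[n] ((Polynomial.X ^ 2 - 1) ^ n))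

private lemma Qeval (n : ℕ) (x : ℝ) : ((X ^ 2 - 1 : ℝ[X]) ^ n).eval x = (x ^ 2 - 1) ^ n := by
  simp

/-- derivatives of order < n of (X²-1)ⁿ vanish at points where x² = 1. -/
private lemma eval_iter_deriv_zero {n k : ℕ} (hk : k < n) {x : ℝ} (hx : x ^ 2 - 1 = 0) :
    (derivative^[k] ((X ^ 2 - 1 : ℝ[X]) ^ n)).eval x = 0 := by
  obtain ⟨r, hr⟩ := pow_sub_dvd_iterate_derivative_pow (X ^ 2 - 1 : ℝ[X]) n k
  rw [hr, eval_mul, eval_pow]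
  have : (X ^ 2 - 1 : ℝ[X]).eval x = 0 := by simpa using hx
  rw [this, zero_pow (by omega), zero_mul]

private lemma poly_intervalIntegrable (p : ℝ[X]) (a b : ℝ) :
    IntervalIntegrable (fun x => p.eval x) MeasureTheory.volume a b :=
  (p.continuous_aeval).intervalIntegrable a b

/-- Integration by parts for polynomials on [-1,1]. -/
private lemma poly_ibp (p q : ℝ[X]) :
    ∫ x in (-1:ℝ)..1, p.eval x * (derivative q).eval x =
      p.eval 1 * q.eval 1 - p.eval (-1) * q.eval (-1) -
        ∫ x in (-1:ℝ)..1, (derivative p).eval x * q.eval x := by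
  exact integral_mul_deriv_eq_deriv_mul
    (fun x _ => p.hasDerivAt x) (fun x _ => q.hasDerivAt x)
    (poly_intervalIntegrable _ _ _) (poly_intervalIntegrable _ _ _)

/-- shifting derivatives by integration by parts -/
private lemma shift (p : ℝ[X]) (n : ℕ) : ∀ k, k ≤ n →
    (∫ x in (-1:ℝ)..1, p.eval x * (derivative^[n] ((X ^ 2 - 1 : ℝ[X]) ^ n)).eval x) =
      (-1 : ℝ) ^ k *
        ∫ x in (-1:ℝ)..1,
          (derivative^[k] p).eval x * (derivative^[n - k] ((X ^ 2 - 1 : ℝ[X]) ^ n)).eval x := by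
  intro k hk
  induction k with
  | zero => simp
  | succ k ih =>
    rw [ih (by omega)]
    have hnk : n - k = (n - (k + 1)) + 1 := by omega
    have h1 : derivative^[n - k] ((X ^ 2 - 1 : ℝ[X]) ^ n)
        = derivative (derivative^[n - (k+1)] ((X ^ 2 - 1 : ℝ[X]) ^ n)) := by
      rw [hnk, Function.iterate_succ_apply']
    rw [h1, poly_ibp]
    rw [eval_iter_deriv_zero (by omega) (by norm_num),
        eval_iter_deriv_zero (by omega) (by norm_num)]
    rw [← Function.iterate_succ_apply' derivative]
    ring

/-- the (2n)-th derivative of (X²-1)ⁿ is the constant (2n)!. -/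
private lemma iter_deriv_top (n : ℕ) :
    derivative^[2 * n] ((X ^ 2 - 1 : ℝ[X]) ^ n) = C ((2 * n).factorial : ℝ) := by
  rcases Nat.eq_zero_or_pos n with h | h
  · subst h; simp
  have hmonic : ((X ^ 2 - 1 : ℝ[X]) ^ n).Monic := by
    apply Monic.pow
    have : (X ^ 2 - 1 : ℝ[X]) = X ^ 2 - C 1 := by simp
    rw [this]
    exact monic_X_pow_sub_C 1 (by norm_num)
  have hdeg : ((X ^ 2 - 1 : ℝ[X]) ^ n).natDegree = 2 * n := by
    have : (X ^ 2 - 1 : ℝ[X]).natDegree = 2 := by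
      have : (X ^ 2 - 1 : ℝ[X]) = X ^ 2 - C 1 := by simp
      rw [this]; exact natDegree_X_pow_sub_C
    rw [natDegree_pow, this]; ring
  set r : ℝ[X] := (X ^ 2 - 1 : ℝ[X]) ^ n - X ^ (2 * n) with hr
  have hrdeg : r.natDegree < 2 * n := by
    have hne : ((X ^ 2 - 1 : ℝ[X]) ^ n) ≠ 0 := hmonic.ne_zero
    have hdlt : r.degree < ((X ^ 2 - 1 : ℝ[X]) ^ n).degree := by
      apply degree_sub_lt
      · rw [degree_eq_natDegree hne, hdeg, degree_X_pow]
      · exact hne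
      · rw [hmonic.leadingCoeff, (monic_X_pow (2*n)).leadingCoeff]
    rcases eq_or_ne r 0 with h0 | h0
    · rw [h0]; simpa using Nat.pos_of_ne_zero (by omega)
    · rw [natDegree_lt_iff_degree_lt h0]
      rwa [degree_eq_natDegree hne, hdeg] at hdlt
  have h0 : derivative^[2 * n] r = 0 := iterate_derivative_eq_zero hrdeg
  have hsub : derivative^[2 * n] ((X ^ 2 - 1 : ℝ[X]) ^ n)
      - derivative^[2 * n] (X ^ (2 * n) : ℝ[X]) = 0 := by
    rw [← iterate_derivative_sub, ← hr, h0]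
  rw [sub_eq_zero] at hsub
  rw [hsub, iterate_derivative_X_pow_eq_C_mul]
  simp [Nat.descFactorial_self]

/-- the basic integral Iₙ = ∫ (x²-1)ⁿ -/
noncomputable def Ibase (n : ℕ) : ℝ := ∫ x in (-1:ℝ)..1, (x ^ 2 - 1) ^ n

private lemma contpow (n : ℕ) : Continuous fun x : ℝ => (x ^ 2 - 1) ^ n := by continuity

private lemma Ibase_rec (n : ℕ) :
    (2 * (n:ℝ) + 3) * Ibase (n + 1) = -(2 * n + 2) * Ibase n := by
  have hder : ∀ x ∈ Set.uIcc (-1:ℝ) 1, HasDerivAt (fun x : ℝ => x * (x ^ 2 - 1) ^ (n + 1))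
      ((2 * (n:ℝ) + 3) * (x ^ 2 - 1) ^ (n + 1) + (2 * (n:ℝ) + 2) * (x ^ 2 - 1) ^ n) x := by
    intro x _
    have h1 : HasDerivAt (fun x : ℝ => (x ^ 2 - 1) ^ (n + 1))
        (((n:ℝ) + 1) * (x ^ 2 - 1) ^ n * (2 * x)) x := by
      have := ((hasDerivAt_pow 2 x).sub_const 1).fun_pow (n + 1)
      refine this.congr_deriv ?_
      push_cast
      ring
    have h2 := (hasDerivAt_id x).fun_mul h1
    refine h2.congr_deriv ?_
    simp only [id_eq]
    ring
  have hint : (∫ x in (-1:ℝ)..1,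
      ((2 * (n:ℝ) + 3) * (x ^ 2 - 1) ^ (n + 1) + (2 * (n:ℝ) + 2) * (x ^ 2 - 1) ^ n)) = 0 := by
    rw [intervalIntegral.integral_eq_sub_of_hasDerivAt hder ?_]
    · norm_num
    · apply Continuous.intervalIntegrable
      continuity
  rw [intervalIntegral.integral_add ((continuous_const.fun_mul (contpow (n+1))).intervalIntegrable _ _)
        ((continuous_const.fun_mul (contpow n)).intervalIntegrable _ _),
      intervalIntegral.integral_const_mul, intervalIntegral.integral_const_mul] at hint
  have e1 : Ibase (n + 1) = ∫ x in (-1:ℝ)..1, (x ^ 2 - 1) ^ (n + 1) := rfl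
  have e2 : Ibase n = ∫ x in (-1:ℝ)..1, (x ^ 2 - 1) ^ n := rfl
  rw [← e1, ← e2] at hint
  linarith

private lemma fact_cast_ne (k : ℕ) : ((k.factorial : ℝ)) ≠ 0 :=
  Nat.cast_ne_zero.mpr k.factorial_ne_zero

private lemma Ibase_closed (n : ℕ) :
    Ibase n = (-1) ^ n * 2 ^ (2 * n + 1) * (n.factorial ^ 2 : ℝ) / (2 * n + 1).factorial := by
  induction n with
  | zero =>
    simp only [Ibase, pow_zero, Nat.mul_zero, Nat.zero_add, Nat.factorial]
    norm_num
  | succ n ih =>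
    have hrec := Ibase_rec n
    rw [ih] at hrec
    have h3 : (2 * (n:ℝ) + 3) ≠ 0 := by positivity
    have hf := fact_cast_ne (2 * n + 1)
    have e2 : (((2 * (n + 1) + 1).factorial : ℝ))
        = (2 * (n:ℝ) + 3) * ((2 * (n:ℝ) + 2) * ((2 * n + 1).factorial : ℝ)) := by
      have h : 2 * (n + 1) + 1 = (2 * n + 1) + 1 + 1 := by ring
      rw [h, Nat.factorial_succ, Nat.factorial_succ]
      push_cast
      ring
    have e1 : (((n + 1).factorial : ℝ)) = ((n:ℝ) + 1) * (n.factorial : ℝ) := by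
      rw [Nat.factorial_succ]; push_cast; ring
    have hval : Ibase (n + 1) = -(2 * (n:ℝ) + 2) *
        ((-1) ^ n * 2 ^ (2 * n + 1) * ((n.factorial : ℝ) ^ 2) / ((2 * n + 1).factorial : ℝ))
          / (2 * (n:ℝ) + 3) := by
      field_simp at hrec ⊢
      linarith
    rw [hval, e1, e2]
    have hp : (2:ℝ) ^ (2 * (n + 1) + 1) = 4 * 2 ^ (2 * n + 1) := by
      rw [show 2 * (n + 1) + 1 = (2 * n + 1) + 2 by ring, pow_add]
      ring
    rw [hp, pow_succ]
    field_simp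
    ring

private lemma Qdeg (n : ℕ) : ((X ^ 2 - 1 : ℝ[X]) ^ n).natDegree = 2 * n := by
  have h2 : (X ^ 2 - 1 : ℝ[X]).natDegree = 2 := by
    have : (X ^ 2 - 1 : ℝ[X]) = X ^ 2 - C 1 := by simp
    rw [this]; exact natDegree_X_pow_sub_C
  rw [natDegree_pow, h2]; ring

private lemma key (m n : ℕ) :
    (∫ x in (-1:ℝ)..1, (derivative^[m] ((X ^ 2 - 1 : ℝ[X]) ^ m)).eval x *
        (derivative^[n] ((X ^ 2 - 1 : ℝ[X]) ^ n)).eval x) =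
      (-1:ℝ) ^ n * ∫ x in (-1:ℝ)..1,
        (derivative^[n + m] ((X ^ 2 - 1 : ℝ[X]) ^ m)).eval x *
          ((X ^ 2 - 1 : ℝ[X]) ^ n).eval x := by
  have h := shift (derivative^[m] ((X ^ 2 - 1 : ℝ[X]) ^ m)) n n le_rfl
  rw [h, Nat.sub_self]
  simp only [Function.iterate_zero_apply, ← Function.iterate_add_apply]

private lemma zero_of_lt {m n : ℕ} (h : m < n) :
    (∫ x in (-1:ℝ)..1, (derivative^[m] ((X ^ 2 - 1 : ℝ[X]) ^ m)).eval x *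
        (derivative^[n] ((X ^ 2 - 1 : ℝ[X]) ^ n)).eval x) = 0 := by
  rw [key m n]
  have hz : derivative^[n + m] ((X ^ 2 - 1 : ℝ[X]) ^ m) = 0 := by
    apply iterate_derivative_eq_zero
    rw [Qdeg]; omega
  simp [hz]

private lemma cross_zero {m n : ℕ} (h : m ≠ n) :
    (∫ x in (-1:ℝ)..1, (derivative^[m] ((X ^ 2 - 1 : ℝ[X]) ^ m)).eval x *
        (derivative^[n] ((X ^ 2 - 1 : ℝ[X]) ^ n)).eval x) = 0 := by
  rcases lt_or_gt_of_ne h with hlt | hgt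
  · exact zero_of_lt hlt
  · rw [intervalIntegral.integral_congr (g := fun x =>
      (derivative^[n] ((X ^ 2 - 1 : ℝ[X]) ^ n)).eval x *
        (derivative^[m] ((X ^ 2 - 1 : ℝ[X]) ^ m)).eval x) (fun x _ => mul_comm _ _)]
    exact zero_of_lt hgt

private lemma final_arith (n : ℕ) :
    (1 / ((n.factorial : ℝ) * 2 ^ n)) * (1 / ((n.factorial : ℝ) * 2 ^ n)) * ((-1) ^ n *
      (((2 * n).factorial : ℝ) *
        ((-1) ^ n * 2 ^ (2 * n + 1) * ((n.factorial : ℝ) ^ 2) / ((2 * n + 1).factorial : ℝ)))) =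
      2 / (2 * (n:ℝ) + 1) := by
  have hsq : ((-1:ℝ)) ^ n * (-1:ℝ) ^ n = 1 := by
    rw [← pow_add, ← two_mul, pow_mul]; norm_num
  have e : (((2 * n + 1).factorial : ℝ)) = (2 * (n:ℝ) + 1) * ((2 * n).factorial : ℝ) := by
    rw [Nat.factorial_succ]; push_cast; ring
  have hp : (2:ℝ) ^ (2 * n + 1) = 2 * (2 ^ n) ^ 2 := by
    rw [show 2 * n + 1 = n + n + 1 by ring, pow_succ, pow_add]; ring
  have h1 : ((n.factorial:ℝ)) ≠ 0 := fact_cast_ne n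
  have h2 : (((2*n).factorial:ℝ)) ≠ 0 := fact_cast_ne _
  have h3 : (2:ℝ)^n ≠ 0 := by positivity
  have h4 : (2*(n:ℝ)+1) ≠ 0 := by positivity
  rw [e, hp]
  trans ((-1:ℝ)^n * (-1)^n) * ((1 / ((n.factorial : ℝ) * 2 ^ n)) *
    (1 / ((n.factorial : ℝ) * 2 ^ n)) * (((2 * n).factorial : ℝ) *
      (2 * (2 ^ n) ^ 2 * ((n.factorial : ℝ) ^ 2)) / ((2 * (n:ℝ) + 1) * ((2 * n).factorial : ℝ))))
  · ring
  · rw [hsq, one_mul]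
    field_simp

theorem legendre_orthogonality (m n : ℕ) :
    ∫ x in (-1 : ℝ)..1, (legendre m).eval x * (legendre n).eval x =
      (2 / (2 * n + 1)) * (if m = n then (1 : ℝ) else 0) := by
  have hconst : ∀ x : ℝ, (legendre m).eval x * (legendre n).eval x
      = (1 / (m.factorial * 2 ^ m : ℝ)) * (1 / (n.factorial * 2 ^ n : ℝ)) *
        ((derivative^[m] ((X ^ 2 - 1 : ℝ[X]) ^ m)).eval x *
          (derivative^[n] ((X ^ 2 - 1 : ℝ[X]) ^ n)).eval x) := by
    intro x
    simp only [legendre, eval_mul, eval_C]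
    ring
  rw [intervalIntegral.integral_congr (fun x _ => hconst x),
      intervalIntegral.integral_const_mul]
  by_cases hmn : m = n
  · subst hmn
    rw [if_pos rfl, mul_one, key m m]
    simp only [show m + m = 2 * m from by ring, iter_deriv_top, eval_C, Qeval]
    rw [intervalIntegral.integral_const_mul]
    have : (∫ x in (-1:ℝ)..1, (x ^ 2 - 1) ^ m) = Ibase m := rfl
    rw [this, Ibase_closed]
    exact final_arith m
  · rw [if_neg hmn, cross_zero hmn, mul_zero, mul_zero]
end

section
/- For the monomial x^n expanded as x^n = Σ_{k=0}^n C_k P_k(x) in Legendre polynomials, the coefficient C_k equals ((2k+1) * 2^{k+1} / (n+k+2)!) * (n! * ((n+k+2)/2)! / ((n-k)/2)!) when n - k is even, and C_k = 0 when n - k is odd. -/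
open Polynomial intervalIntegral

lemma iterD_X_mul (m : ℕ) (p : ℝ[X]) :
    derivative^[m+1] (X * p) = X * derivative^[m+1] p + ((m:ℝ[X])+1) * derivative^[m] p := by
  induction m with
  | zero => simp [derivative_mul]; ring
  | succ m ih =>
    rw [Function.iterate_succ_apply', ih, derivative_add, derivative_mul, derivative_mul,
      derivative_X, one_mul,
      ← Function.iterate_succ_apply' derivative (m+1) p,
      ← Function.iterate_succ_apply' derivative m p]
    push_cast
    simp only [derivative_add, derivative_natCast, derivative_one]
    ring

lemma iterD_q_mul (m : ℕ) (p : ℝ[X]) :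
    derivative^[m+2] ((X^2-1) * p) = (X^2-1) * derivative^[m+2] p
      + (2*(m:ℝ[X])+4) * (X * derivative^[m+1] p) + (((m:ℝ[X])+2)*((m:ℝ[X])+1)) * derivative^[m] p := by
  induction m with
  | zero =>
    show derivative (derivative ((X^2-1) * p)) = _
    simp only [Function.iterate_succ_apply', Function.iterate_zero_apply,
      derivative_mul, derivative_sub, derivative_one, derivative_X_pow, derivative_add,
      derivative_X, derivative_C, map_ofNat, derivative_zero, derivative_ofNat, derivative_natCast,
      C_eq_natCast]
    push_cast
    ring
  | succ m ih =>
    simp only [show m+1+2 = m+2+1 from rfl, show m+1+1 = m+2 from rfl]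
    rw [Function.iterate_succ_apply' derivative (m+2), ih]
    simp only [derivative_add, derivative_mul, derivative_sub, derivative_one,
      derivative_X, derivative_X_pow, derivative_C, map_ofNat, derivative_zero,
      derivative_ofNat, derivative_natCast, C_eq_natCast]
    rw [← Function.iterate_succ_apply' derivative (m+2) p,
      ← Function.iterate_succ_apply' derivative (m+1) p,
      ← Function.iterate_succ_apply' derivative m p]
    push_cast
    ring

lemma dq_pow (m : ℕ) :
    derivative (((X:ℝ[X])^2-1)^(m+1)) = (2*(m:ℝ[X])+2) * (X * ((X:ℝ[X])^2-1)^m) := by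
  rw [derivative_pow_succ]
  simp only [derivative_sub, derivative_one, derivative_X_pow, C_eq_natCast, C_add, C_1]
  push_cast
  ring

lemma lemC (m : ℕ) : ((X:ℝ[X])^2-1) * derivative^[m+1] (((X:ℝ[X])^2-1)^(m+1)) =
    2 * (X * derivative^[m] (((X:ℝ[X])^2-1)^(m+1)))
    + ((m:ℝ[X])*((m:ℝ[X])+3)) * derivative^[m-1] (((X:ℝ[X])^2-1)^(m+1)) := by
  match m with
  | 0 =>
    simp only [zero_add, pow_one, Function.iterate_one, Function.iterate_zero_apply,
      derivative_sub, derivative_one, derivative_X_pow, Nat.cast_zero, C_eq_natCast]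
    push_cast
    ring
  | 1 =>
    simp only [show (1:ℕ)-1 = 0 from rfl, Function.iterate_succ_apply',
      Function.iterate_zero_apply, Function.iterate_one]
    simp only [derivative_pow, derivative_sub, derivative_one, derivative_X_pow, derivative_mul,
      derivative_X, derivative_C, map_ofNat, derivative_zero, derivative_ofNat, derivative_natCast,
      C_eq_natCast]
    push_cast
    ring
  | (s+2) =>
    have hd : derivative (((X:ℝ[X])^2-1)^(s+3)) = C (2*(s:ℝ)+6) * (X * ((X:ℝ[X])^2-1)^(s+2)) := by
      have h := dq_pow (s+2)
      push_cast at h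
      rw [h]
      simp only [C_add, C_mul, map_ofNat, C_eq_natCast]
      push_cast
      ring
    have key : ((X:ℝ[X])^2-1) * derivative (((X:ℝ[X])^2-1)^(s+3))
        = C (2*(s:ℝ)+6) * (X * ((X:ℝ[X])^2-1)^(s+3)) := by
      rw [hd]; ring
    have hA : derivative^[s+2] (((X:ℝ[X])^2-1) * derivative (((X:ℝ[X])^2-1)^(s+3)))
        = C (2*(s:ℝ)+6) * (X * derivative^[s+2] (((X:ℝ[X])^2-1)^(s+3))
            + ((s:ℝ[X])+2) * derivative^[s+1] (((X:ℝ[X])^2-1)^(s+3))) := by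
      rw [key, iterate_derivative_C_mul, iterD_X_mul (s+1)]
      push_cast
      ring
    have hB := iterD_q_mul s (derivative (((X:ℝ[X])^2-1)^(s+3)))
    rw [← Function.iterate_succ_apply derivative (s+2) (((X:ℝ[X])^2-1)^(s+3)),
      ← Function.iterate_succ_apply derivative (s+1) (((X:ℝ[X])^2-1)^(s+3)),
      ← Function.iterate_succ_apply derivative s (((X:ℝ[X])^2-1)^(s+3))] at hB
    rw [hA] at hB
    simp only [C_add, C_mul, map_ofNat, C_eq_natCast] at hB
    push_cast at hB ⊢
    simp only [show s+2-1 = s+1 from rfl, show s+2+1 = s+3 from rfl] at *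
    linear_combination -hB

lemma dq_pow_C (m : ℕ) :
    derivative (((X:ℝ[X])^2-1)^(m+1)) = C (2*(m:ℝ)+2) * (X * ((X:ℝ[X])^2-1)^m) := by
  have h := dq_pow m
  rw [h]
  simp only [C_add, C_mul, map_ofNat, C_eq_natCast]

lemma lemB (m : ℕ) : ((m:ℝ[X])+2) * derivative^[m] (((X:ℝ[X])^2-1)^(m+1))
    = X * derivative^[m+1] (((X:ℝ[X])^2-1)^(m+1))
      - (2*(m:ℝ[X])+2) * derivative^[m] (((X:ℝ[X])^2-1)^m) := by
  match m with
  | 0 =>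
    simp only [zero_add, Function.iterate_zero_apply, Function.iterate_one, pow_one, pow_zero,
      derivative_sub, derivative_one, derivative_X_pow, Nat.cast_zero, C_eq_natCast]
    push_cast
    ring
  | 1 =>
    simp only [Function.iterate_succ_apply', Function.iterate_zero_apply, Function.iterate_one]
    simp only [derivative_pow, derivative_sub, derivative_one, derivative_X_pow, derivative_mul,
      derivative_X, derivative_C, map_ofNat, derivative_zero, derivative_ofNat, derivative_natCast,
      C_eq_natCast]
    push_cast
    ring
  | (s+2) =>
    have h1 : derivative^[s+2] (((X:ℝ[X])^2-1)^(s+3))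
        = ((X:ℝ[X])^2-1) * derivative^[s+2] (((X:ℝ[X])^2-1)^(s+2))
          + (2*(s:ℝ[X])+4) * (X * derivative^[s+1] (((X:ℝ[X])^2-1)^(s+2)))
          + (((s:ℝ[X])+2)*((s:ℝ[X])+1)) * derivative^[s] (((X:ℝ[X])^2-1)^(s+2)) := by
      rw [show (((X:ℝ[X])^2-1)^(s+3)) = ((X:ℝ[X])^2-1) * ((X:ℝ[X])^2-1)^(s+2) from by ring]
      exact iterD_q_mul s _
    have h2 := lemC (s+1)
    have h3 : derivative^[s+3] (((X:ℝ[X])^2-1)^(s+3))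
        = C (2*(s:ℝ)+6) * (X * derivative^[s+2] (((X:ℝ[X])^2-1)^(s+2))
            + ((s:ℝ[X])+2) * derivative^[s+1] (((X:ℝ[X])^2-1)^(s+2))) := by
      rw [Function.iterate_succ_apply derivative (s+2), dq_pow_C (s+2),
        iterate_derivative_C_mul, iterD_X_mul (s+1)]
      push_cast
      ring
    simp only [show s+1-1 = s from rfl] at h2
    simp only [C_add, C_mul, map_ofNat, C_eq_natCast] at h3
    push_cast at h1 h2 h3 ⊢
    linear_combination ((s:ℝ[X])+4) * h1 - ((s:ℝ[X])+2) * h2 - X * h3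

lemma lemA (m : ℕ) : derivative^[m+2] (((X:ℝ[X])^2-1)^(m+2))
    = (2*(m:ℝ[X])+4) * (X * derivative^[m+1] (((X:ℝ[X])^2-1)^(m+1)))
      + ((2*(m:ℝ[X])+4)*((m:ℝ[X])+1)) * derivative^[m] (((X:ℝ[X])^2-1)^(m+1)) := by
  rw [Function.iterate_succ_apply derivative (m+1), dq_pow_C (m+1),
    iterate_derivative_C_mul, iterD_X_mul m]
  simp only [C_add, C_mul, map_ofNat, C_eq_natCast]
  push_cast
  ring

lemma lemR (m : ℕ) : C ((m:ℝ)+2) * derivative^[m+2] (((X:ℝ[X])^2-1)^(m+2))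
    = C ((((m:ℝ))+2)*(4*(m:ℝ)+6)) * (X * derivative^[m+1] (((X:ℝ[X])^2-1)^(m+1)))
      - C (4*((m:ℝ)+1)^2*((m:ℝ)+2)) * derivative^[m] (((X:ℝ[X])^2-1)^m) := by
  simp only [C_add, C_mul, C_pow, map_ofNat, C_eq_natCast, C_1]
  push_cast
  linear_combination ((m:ℝ[X])+2) * lemA m + ((2*(m:ℝ[X])+4)*((m:ℝ[X])+1)) * lemB m

lemma R_eq (j : ℕ) : derivative^[j] (((X:ℝ[X])^2-1)^j)
    = ((j.factorial * 2^j : ℝ)) • legendre j := by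
  unfold legendre
  rw [← smul_eq_C_mul, smul_smul]
  have hne : (j.factorial * 2^j : ℝ) ≠ 0 := by positivity
  rw [mul_one_div, div_self hne, one_smul]

lemma fact2 (m : ℕ) : (((m+2).factorial : ℝ)) = ((m:ℝ)+2)*((m:ℝ)+1)*(m.factorial) := by
  rw [show m+2 = (m+1)+1 from rfl, Nat.factorial_succ, Nat.factorial_succ]
  push_cast
  ring

lemma fact1 (m : ℕ) : (((m+1).factorial : ℝ)) = ((m:ℝ)+1)*(m.factorial) := by
  rw [Nat.factorial_succ]; push_cast; ring

lemma bonnetM (m : ℕ) : (2*(m:ℝ)+3) • (X * legendre (m+1))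
    = ((m:ℝ)+2) • legendre (m+2) + ((m:ℝ)+1) • legendre m := by
  have h := lemR m
  rw [R_eq (m+2), R_eq (m+1), R_eq m] at h
  rw [← smul_eq_C_mul, ← smul_eq_C_mul, ← smul_eq_C_mul] at h
  rw [mul_smul_comm] at h
  rw [fact2 m, fact1 m] at h
  have hF : (m.factorial : ℝ) ≠ 0 := by positivity
  have hkey : ((4*((m:ℝ)+1)*((m:ℝ)+2)*(m.factorial)*2^m) • ((2*(m:ℝ)+3) • (X * legendre (m+1))) : ℝ[X])
      = (4*((m:ℝ)+1)*((m:ℝ)+2)*(m.factorial)*2^m) • (((m:ℝ)+2) • legendre (m+2) + ((m:ℝ)+1) • legendre m) := by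
    linear_combination (norm := module) -h
  have hne : (4*((m:ℝ)+1)*((m:ℝ)+2)*(m.factorial)*(2:ℝ)^m) ≠ 0 := by positivity
  exact smul_right_injective ℝ[X] hne hkey

lemma legendre_zero : legendre 0 = 1 := by
  simp [legendre]

lemma legendre_one : legendre 1 = X := by
  have : legendre 1 = C (1/2 : ℝ) * derivative ((X^2-1 : ℝ[X])^1) := by
    simp [legendre]
  rw [this, dq_pow_C 0, ← mul_assoc, ← C_mul]
  norm_num

lemma bonnet' (k : ℕ) : X * legendre k
    = (((k:ℝ)+1)/(2*(k:ℝ)+1)) • legendre (k+1) + ((k:ℝ)/(2*(k:ℝ)+1)) • legendre (k-1) := by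
  match k with
  | 0 => simp [legendre_zero, legendre_one]
  | (m+1) =>
    have h := bonnetM m
    have hne : (2*(m:ℝ)+3) ≠ 0 := by positivity
    have h2 : X * legendre (m+1)
        = (2*(m:ℝ)+3)⁻¹ • (((m:ℝ)+2) • legendre (m+2) + ((m:ℝ)+1) • legendre m) := by
      rw [← h, inv_smul_smul₀ hne]
    rw [h2]
    push_cast
    match_scalars <;> field_simp <;> (try ring) <;> tauto

lemma natDegree_q_pow (k : ℕ) : (((X:ℝ[X])^2-1)^k).natDegree = 2*k := by
  have h1 : ((X:ℝ[X])^2-1) = X^2 - C 1 := by rw [C_1]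
  have hm : (((X:ℝ[X])^2-1)).Monic := by
    rw [h1]; exact monic_X_pow_sub_C 1 (by norm_num)
  rw [hm.natDegree_pow, h1, natDegree_X_pow_sub_C]
  ring

lemma legendre_coeff_gt {k m : ℕ} (h : k < m) : (legendre k).coeff m = 0 := by
  unfold legendre
  rw [coeff_C_mul]
  have hd : (derivative^[k] (((X:ℝ[X])^2-1)^k)).natDegree < m := by
    calc (derivative^[k] (((X:ℝ[X])^2-1)^k)).natDegree
        ≤ (((X:ℝ[X])^2-1)^k).natDegree - k := natDegree_iterate_derivative _ _
      _ ≤ k := by rw [natDegree_q_pow]; omega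
      _ < m := h
  rw [coeff_eq_zero_of_natDegree_lt hd, mul_zero]

lemma legendre_coeff_self (k : ℕ) : (legendre k).coeff k ≠ 0 := by
  unfold legendre
  rw [coeff_C_mul, coeff_iterate_derivative]
  have hc : (((X:ℝ[X])^2-1)^k).coeff (k+k) = 1 := by
    have h1 : ((X:ℝ[X])^2-1) = X^2 - C 1 := by rw [C_1]
    have hm : (((X:ℝ[X])^2-1)^k).Monic := by
      rw [h1]; exact (monic_X_pow_sub_C 1 (by norm_num)).pow k
    have : k + k = (((X:ℝ[X])^2-1)^k).natDegree := by rw [natDegree_q_pow]; ring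
    rw [this]
    exact hm.coeff_natDegree
  rw [hc]
  simp only [nsmul_eq_mul, mul_one]
  have h1 : (0:ℝ) < 1 / (k.factorial * 2^k : ℝ) := by positivity
  have h2 : 0 < (k+k).descFactorial k := Nat.pos_of_ne_zero (fun hz => by
    have := Nat.descFactorial_eq_zero_iff_lt.mp hz; omega)
  have h2' : (0:ℝ) < ((k+k).descFactorial k : ℝ) := by exact_mod_cast h2
  positivity

lemma sum_legendre_eq_zero : ∀ (N : ℕ) (f : ℕ → ℝ),
    (∑ k ∈ Finset.range N, f k • legendre k) = 0 → ∀ k < N, f k = 0 := by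
  intro N
  induction N with
  | zero => intro f h k hk; omega
  | succ N ih =>
    intro f h k hk
    have hN : f N = 0 := by
      have hc := congrArg (fun p : ℝ[X] => p.coeff N) h
      simp only [finset_sum_coeff, coeff_smul, coeff_zero, smul_eq_mul] at hc
      rw [Finset.sum_range_succ] at hc
      have hz : ∀ j ∈ Finset.range N, f j * (legendre j).coeff N = 0 := by
        intro j hj
        rw [legendre_coeff_gt (Finset.mem_range.mp hj), mul_zero]
      rw [Finset.sum_eq_zero hz, zero_add] at hc
      exact (mul_eq_zero.mp hc).resolve_right (legendre_coeff_self N)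
    rcases Nat.lt_succ_iff_lt_or_eq.mp hk with h' | rfl
    · apply ih f _ k h'
      rw [Finset.sum_range_succ, hN, zero_smul, add_zero] at h
      exact h
    · exact hN


noncomputable def dcoef (n k : ℕ) : ℝ :=
  if Even (n - k) then
    ((2 * k + 1) * 2 ^ (k + 1) / ((n + k + 2).factorial : ℝ)) *
      ((n.factorial : ℝ) * (((n + k + 2) / 2).factorial : ℝ) / (((n - k) / 2).factorial : ℝ))
  else 0

lemma dcoef_odd {n k : ℕ} (h : ¬ Even (n - k)) : dcoef n k = 0 := if_neg h

lemma drec_main (i t : ℕ) :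
    dcoef (i+2*t+3) (i+1)
      = dcoef (i+2*t+2) i * (((i:ℝ)+1)/(2*(i:ℝ)+1))
        + dcoef (i+2*t+2) (i+2) * ((((i+2:ℕ):ℝ))/(2*((i+2:ℕ):ℝ)+1)) := by
  unfold dcoef
  have c1 : Even (i+2*t+3-(i+1)) := ⟨t+1, by omega⟩
  have c2 : Even (i+2*t+2-i) := ⟨t+1, by omega⟩
  have c3 : Even (i+2*t+2-(i+2)) := ⟨t, by omega⟩
  rw [if_pos c1, if_pos c2, if_pos c3]
  rw [show (i+2*t+3+(i+1)+2)/2 = i+t+3 from by omega,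
      show (i+2*t+3-(i+1))/2 = t+1 from by omega,
      show (i+2*t+2+i+2)/2 = i+t+2 from by omega,
      show (i+2*t+2-i)/2 = t+1 from by omega,
      show (i+2*t+2+(i+2)+2)/2 = i+t+3 from by omega,
      show (i+2*t+2-(i+2))/2 = t from by omega,
      show i+2*t+3+(i+1)+2 = 2*i+2*t+6 from by omega,
      show i+2*t+2+i+2 = 2*i+2*t+4 from by omega,
      show i+2*t+2+(i+2)+2 = 2*i+2*t+6 from by omega]
  have f1 : ((2*i+2*t+6).factorial : ℝ)
      = (2*(i:ℝ)+2*t+6)*(2*(i:ℝ)+2*t+5)*((2*i+2*t+4).factorial : ℝ) := by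
    rw [show 2*i+2*t+6 = (2*i+2*t+4)+1+1 from by omega, Nat.factorial_succ, Nat.factorial_succ]
    push_cast; ring
  have f2 : ((i+2*t+3).factorial : ℝ) = ((i:ℝ)+2*t+3)*((i+2*t+2).factorial : ℝ) := by
    rw [show i+2*t+3 = (i+2*t+2)+1 from by omega, Nat.factorial_succ]
    push_cast; ring
  have f3 : ((i+t+3).factorial : ℝ) = ((i:ℝ)+t+3)*((i+t+2).factorial : ℝ) := by
    rw [show i+t+3 = (i+t+2)+1 from by omega, Nat.factorial_succ]
    push_cast; ring
  have f4 : ((t+1).factorial : ℝ) = ((t:ℝ)+1)*(t.factorial : ℝ) := by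
    rw [Nat.factorial_succ]; push_cast; ring
  rw [f1, f2, f3, f4]
  have h1 : ((2*i+2*t+4).factorial : ℝ) ≠ 0 := by positivity
  have h2 : ((i+2*t+2).factorial : ℝ) ≠ 0 := by positivity
  have h3 : ((i+t+2).factorial : ℝ) ≠ 0 := by positivity
  have h4 : ((t).factorial : ℝ) ≠ 0 := by positivity
  push_cast
  field_simp
  ring

lemma drec_top (n : ℕ) :
    dcoef (n+1) (n+1) = dcoef n n * (((n:ℝ)+1)/(2*(n:ℝ)+1)) := by
  unfold dcoef
  have c1 : Even (n+1-(n+1)) := ⟨0, by omega⟩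
  have c2 : Even (n-n) := ⟨0, by omega⟩
  rw [if_pos c1, if_pos c2]
  rw [show (n+1+(n+1)+2)/2 = n+2 from by omega,
      show (n+1-(n+1))/2 = 0 from by omega,
      show (n+n+2)/2 = n+1 from by omega,
      show (n-n)/2 = 0 from by omega,
      show n+1+(n+1)+2 = 2*n+4 from by omega,
      show n+n+2 = 2*n+2 from by omega]
  have f1 : ((2*n+4).factorial : ℝ) = (2*(n:ℝ)+4)*(2*(n:ℝ)+3)*((2*n+2).factorial : ℝ) := by
    rw [show 2*n+4 = (2*n+2)+1+1 from by omega, Nat.factorial_succ, Nat.factorial_succ]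
    push_cast; ring
  have f2 : ((n+2).factorial : ℝ) = ((n:ℝ)+2)*((n+1).factorial : ℝ) := by
    rw [show n+2 = (n+1)+1 from by omega, Nat.factorial_succ]; push_cast; ring
  have f3 : ((n+1).factorial : ℝ) = ((n:ℝ)+1)*(n.factorial : ℝ) := by
    rw [Nat.factorial_succ]; push_cast; ring
  rw [f1, f2, f3]
  have h1 : ((2*n+2).factorial : ℝ) ≠ 0 := by positivity
  have h2 : ((n).factorial : ℝ) ≠ 0 := by positivity
  push_cast
  field_simp
  ring

lemma drec_j0 (t : ℕ) :
    dcoef (2*t+2) 0 = dcoef (2*t+1) 1 * (((1:ℕ):ℝ)/(2*((1:ℕ):ℝ)+1)) := by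
  unfold dcoef
  have c1 : Even (2*t+2-0) := ⟨t+1, by omega⟩
  have c2 : Even (2*t+1-1) := ⟨t, by omega⟩
  rw [if_pos c1, if_pos c2]
  rw [show (2*t+2+0+2)/2 = t+2 from by omega,
      show (2*t+2-0)/2 = t+1 from by omega,
      show (2*t+1-1)/2 = t from by omega,
      show 2*t+2+0+2 = 2*t+4 from by omega]
  have f1 : ((2*t+2).factorial : ℝ) = (2*(t:ℝ)+2)*((2*t+1).factorial : ℝ) := by
    rw [show 2*t+2 = (2*t+1)+1 from by omega, Nat.factorial_succ]; push_cast; ring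
  have f2 : ((t+1).factorial : ℝ) = ((t:ℝ)+1)*(t.factorial : ℝ) := by
    rw [Nat.factorial_succ]; push_cast; ring
  rw [f1, f2]
  have h1 : ((2*t+4).factorial : ℝ) ≠ 0 := by positivity
  have h2 : ((t).factorial : ℝ) ≠ 0 := by positivity
  have h3 : ((t+2).factorial : ℝ) ≠ 0 := by positivity
  have h4 : ((2*t+1).factorial : ℝ) ≠ 0 := by positivity
  push_cast
  field_simp
  ring

lemma drec (n j : ℕ) (hj : j < n+2) :
    dcoef (n+1) j
      = (if j = 0 then (0:ℝ)
          else dcoef n (j-1) * ((((j-1:ℕ):ℝ)+1)/(2*((j-1:ℕ):ℝ)+1)))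
        + (if j+1 ≤ n then dcoef n (j+1) * ((((j+1:ℕ):ℝ))/(2*((j+1:ℕ):ℝ)+1)) else 0) := by
  rcases j with _ | i
  · -- j = 0
    rw [if_pos rfl, zero_add]
    by_cases hn : Even (n+1)
    · obtain ⟨t, ht⟩ : ∃ t, n = 2*t+1 := by
        rcases hn with ⟨r, hr⟩; exact ⟨r-1, by omega⟩
      subst ht
      rw [if_pos (by omega)]
      exact drec_j0 t
    · have h0 : dcoef (n+1) 0 = 0 := dcoef_odd (by simpa using hn)
      rw [h0]
      rcases Nat.eq_zero_or_pos n with rfl | hn1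
      · norm_num
      · rw [if_pos (by omega : 0+1 ≤ n)]
        have : dcoef n 1 = 0 := dcoef_odd (by
          intro hcon
          apply hn
          rcases hcon with ⟨r, hr⟩
          exact ⟨r+1, by omega⟩)
        rw [this, zero_mul]
  · -- j = i+1
    rw [if_neg (Nat.succ_ne_zero i), Nat.add_sub_cancel]
    by_cases hpar : Even (n - i)
    · rcases Nat.lt_or_ge (i+1) (n+1) with hlt | hge
      · -- i+1 ≤ n
        have hi1 : i + 1 ≤ n := by omega
        have hi2 : i + 2 ≤ n := by
          rcases hpar with ⟨r, hr⟩
          omega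
        obtain ⟨t, ht⟩ : ∃ t, n = i+2*t+2 := by
          rcases hpar with ⟨r, hr⟩; exact ⟨r-1, by omega⟩
        subst ht
        rw [if_pos (by omega : i+1+1 ≤ i+2*t+2)]
        have := drec_main i t
        rw [show i+2*t+2+1 = i+2*t+3 from by omega]
        rw [this]
      · -- i+1 = n+1, i.e. i = n
        have hin : i = n := by omega
        subst hin
        rw [if_neg (by omega : ¬ i+1+1 ≤ i), add_zero]
        exact drec_top i
    · -- odd case
      have h0 : dcoef (n+1) (i+1) = 0 := dcoef_odd (by
        intro hcon; apply hpar
        rcases hcon with ⟨r, hr⟩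
        exact ⟨r, by omega⟩)
      have h1 : dcoef n i = 0 := dcoef_odd (by
        intro hcon; apply hpar
        rcases hcon with ⟨r, hr⟩
        -- n - i = n - i; hcon : n - i = r + r... same
        exact ⟨r, by omega⟩)
      rw [h0, h1, zero_mul]
      by_cases hle : i+1+1 ≤ n
      · have h2 : dcoef n (i+2) = 0 := dcoef_odd (by
          intro hcon; apply hpar
          rcases hcon with ⟨r, hr⟩
          exact ⟨r+1, by omega⟩)
        rw [if_pos hle, h2, zero_mul]
        norm_num
      · rw [if_neg hle]
        norm_num


lemma expand (n : ℕ) : (X^n : ℝ[X]) = ∑ k ∈ Finset.range (n+1), dcoef n k • legendre k := by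
  induction n with
  | zero =>
    rw [Finset.sum_range_one, legendre_zero]
    unfold dcoef
    norm_num [Nat.factorial]
  | succ n ih =>
    have step1 : (X^(n+1) : ℝ[X]) = ∑ k ∈ Finset.range (n+1),
        ((dcoef n k * (((k:ℝ)+1)/(2*(k:ℝ)+1))) • legendre (k+1)
         + (dcoef n k * ((k:ℝ)/(2*(k:ℝ)+1))) • legendre (k-1)) := by
      rw [pow_succ, mul_comm, ih, Finset.mul_sum]
      refine Finset.sum_congr rfl fun k _ => ?_
      rw [mul_smul_comm, bonnet' k, smul_add, smul_smul, smul_smul]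
    rw [step1, Finset.sum_add_distrib]
    have e1 : (∑ k ∈ Finset.range (n+1), (dcoef n k * (((k:ℝ)+1)/(2*(k:ℝ)+1))) • legendre (k+1))
        = ∑ j ∈ Finset.range (n+2), (if j = 0 then (0:ℝ)
            else dcoef n (j-1) * ((((j-1:ℕ):ℝ)+1)/(2*((j-1:ℕ):ℝ)+1))) • legendre j := by
      conv_rhs => rw [Finset.sum_range_succ']
      simp only [Nat.add_sub_cancel, Nat.succ_ne_zero, if_false, if_true, eq_self_iff_true, zero_smul, add_zero]
    have e2 : (∑ k ∈ Finset.range (n+1), (dcoef n k * ((k:ℝ)/(2*(k:ℝ)+1))) • legendre (k-1))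
        = ∑ j ∈ Finset.range (n+2), (if j+1 ≤ n
            then dcoef n (j+1) * ((((j+1:ℕ):ℝ))/(2*((j+1:ℕ):ℝ)+1)) else 0) • legendre j := by
      rw [Finset.sum_range_succ']
      have hz : (dcoef n 0 * (((0:ℕ):ℝ)/(2*((0:ℕ):ℝ)+1))) • legendre (0-1) = 0 := by
        norm_num
      rw [hz, add_zero]
      rw [← Finset.sum_subset (Finset.range_subset_range.mpr (by omega : n ≤ n+2))
        (fun j hj hnj => by
          rw [if_neg (by simp at hj hnj; omega : ¬ j+1 ≤ n), zero_smul])]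
      refine Finset.sum_congr rfl fun i hi => ?_
      rw [if_pos (by simp at hi; omega : i+1 ≤ n), Nat.add_sub_cancel]
    rw [e1, e2, ← Finset.sum_add_distrib]
    refine Finset.sum_congr rfl fun j hj => ?_
    rw [← add_smul, ← drec n j (Finset.mem_range.mp hj)]

theorem legendre_coeff_of_monomial (n : ℕ) (c : ℕ → ℝ)
    (h : (Polynomial.X ^ n : Polynomial ℝ) = ∑ k ∈ Finset.range (n + 1), c k • legendre k) :
    ∀ k ≤ n,
      (Even ((n : ℤ) - k) →
        c k = ((2 * k + 1) * 2 ^ (k + 1) / ((n + k + 2).factorial : ℝ)) *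
          ((n.factorial : ℝ) * (((n + k + 2) / 2).factorial : ℝ) /
            (((n - k) / 2).factorial : ℝ))) ∧
      (¬ Even ((n : ℤ) - k) → c k = 0) := by

  intro k hk
  have hzero : (∑ j ∈ Finset.range (n+1), (c j - dcoef n j) • legendre j) = 0 := by
    simp only [sub_smul, Finset.sum_sub_distrib, ← h, ← expand n, sub_self]
  have hc : c k = dcoef n k := by
    have := sum_legendre_eq_zero (n+1) _ hzero k (by omega)
    linarith
  have hev : Even ((n : ℤ) - k) ↔ Even (n - k) := by
    rw [show ((n:ℤ) - k) = ((n - k : ℕ) : ℤ) from by omega, Int.even_coe_nat]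
  constructor
  · intro he
    rw [hc]
    unfold dcoef
    rw [if_pos (hev.mp he)]
  · intro ho
    rw [hc, dcoef_odd (fun hcon => ho (hev.mpr hcon))]
end

section
/- For every natural number n, Σ_{k=0}^n B_k(x) B_{n-k}(x) = (2/(n+2)) Σ_{l=0}^{n-2} C(n+2, l) B_{n-l} B_l(x) + (n+1) B_n(x), as an identity of polynomials. -/
open Polynomial Finset

noncomputable def Tb (n : ℕ) : ℚ[X] :=
  ∑ k ∈ Finset.range (n + 1), Polynomial.bernoulli k * Polynomial.bernoulli (n - k)

noncomputable def Rb (n : ℕ) : ℚ[X] :=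
  ((2 : ℚ) / (n + 2)) •
      ∑ l ∈ Finset.range (n - 1),
        (((n + 2).choose l : ℚ) * _root_.bernoulli (n - l)) • Polynomial.bernoulli l +
    ((n : ℚ) + 1) • Polynomial.bernoulli n

lemma derivT (n : ℕ) : derivative (Tb (n + 1)) = ((n : ℚ) + 2) • Tb n := by
  rw [Tb, Tb, derivative_sum]
  rw [Finset.smul_sum]
  simp_rw [derivative_mul, derivative_bernoulli]
  rw [Finset.sum_add_distrib, Finset.sum_range_succ' (fun k => (k : ℚ[X]) * Polynomial.bernoulli (k-1) * Polynomial.bernoulli (n+1-k)), Finset.sum_range_succ (fun k => Polynomial.bernoulli k * (((n+1-k : ℕ) : ℚ[X]) * Polynomial.bernoulli (n+1-k-1)))]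
  simp only [Nat.cast_zero, zero_mul, add_zero, Nat.sub_self, mul_zero, tsub_self]
  rw [← Finset.sum_add_distrib]
  refine Finset.sum_congr rfl fun k hk => ?_
  rw [Finset.mem_range] at hk
  have h1 : k + 1 - 1 = k := rfl
  have h2 : n + 1 - (k + 1) = n - k := by omega
  have h3 : n + 1 - k - 1 = n - k := by omega
  have h4 : ((n + 1 - k : ℕ) : ℚ[X]) = (n : ℚ[X]) + 1 - k := by
    push_cast [Nat.cast_sub (by omega : k ≤ n + 1)]; ring
  rw [h1, h2, h3, h4, Polynomial.smul_eq_C_mul]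
  have h5 : Polynomial.C ((n : ℚ) + 2) = (n : ℚ[X]) + 2 := by
    have e : ((n : ℚ) + 2) = ((n + 2 : ℕ) : ℚ) := by push_cast; ring
    rw [e, Polynomial.C_eq_natCast]; push_cast; ring
  rw [h5]
  push_cast
  ring

lemma derivR (n : ℕ) (hn : 1 ≤ n) : derivative (Rb (n + 1)) = ((n : ℚ) + 2) • Rb n := by
  rw [Rb, Rb, derivative_add, derivative_smul, derivative_smul, derivative_sum]
  simp_rw [derivative_smul, derivative_bernoulli]
  rw [smul_add, smul_smul, Finset.smul_sum, Finset.smul_sum]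
  rw [show n + 1 - 1 = n from rfl]
  rw [show Finset.range n = Finset.range ((n - 1) + 1) from by rw [Nat.sub_add_cancel hn]]
  rw [Finset.sum_range_succ']
  simp only [Nat.cast_zero, zero_mul, smul_zero, add_zero]
  congr 1
  · refine Finset.sum_congr rfl fun m hm => ?_
    rw [Finset.mem_range] at hm
    have h1 : m + 1 - 1 = m := rfl
    have h2 : n + 1 - (m + 1) = n - m := by omega
    rw [h1, h2]
    have h3 : ((m + 1 : ℕ) : ℚ[X]) * Polynomial.bernoulli m = ((m : ℚ) + 1) • Polynomial.bernoulli m := by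
      rw [Polynomial.smul_eq_C_mul]
      congr 1
      have e : ((m : ℚ) + 1) = ((m + 1 : ℕ) : ℚ) := by push_cast; ring
      rw [e, Polynomial.C_eq_natCast]
    rw [h3, smul_smul, smul_smul, smul_smul]
    congr 1
    have hchoose : ((m:ℚ) + 1) * ((n + 3).choose (m + 1) : ℚ) = ((n:ℚ) + 3) * ((n + 2).choose m : ℚ) := by
      have h := Nat.add_one_mul_choose_eq (n + 2) m
      have h2 : (((n + 2 + 1) * (n + 2).choose m : ℕ) : ℚ) = (((n + 3).choose (m + 1) * (m + 1) : ℕ) : ℚ) := by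
        rw [h]
      push_cast at h2
      linarith
    have hcast : (n + 1 + 2).choose (m + 1) = (n + 3).choose (m + 1) := by
      congr 1
    rw [hcast]
    push_cast
    push_cast at hchoose
    field_simp
    linear_combination (_root_.bernoulli (n - m)) * hchoose
  · have h4 : ((n + 1 : ℕ) : ℚ[X]) * Polynomial.bernoulli n = ((n : ℚ) + 1) • Polynomial.bernoulli n := by
      rw [Polynomial.smul_eq_C_mul]
      congr 1
      have e : ((n : ℚ) + 1) = ((n + 1 : ℕ) : ℚ) := by push_cast; ring
      rw [e, Polynomial.C_eq_natCast]
    rw [h4, smul_smul, smul_smul]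
    congr 1
    push_cast
    ring

noncomputable def intL : ℚ[X] →ₗ[ℚ] ℚ where
  toFun p := p.sum fun i a => a / (i + 1)
  map_add' p q := Polynomial.sum_add_index p q _ (fun i => zero_div _) (fun i a b => add_div a b _)
  map_smul' c p := by
    dsimp only [RingHom.id_apply]
    rw [Polynomial.sum_smul_index p c (fun i a => a / (i + 1)) (fun i => zero_div _)]
    simp only [smul_eq_mul, Polynomial.sum, Finset.mul_sum, mul_div_assoc]

lemma intL_apply (p : ℚ[X]) : intL p = p.sum fun i a => a / (i + 1) := rfl

lemma intL_C (c : ℚ) : intL (C c) = c := by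
  rw [intL_apply, Polynomial.sum_C_index (by simp)]
  norm_num

lemma intL_deriv (q : ℚ[X]) : intL (derivative q) = q.eval 1 - q.eval 0 := by
  induction q using Polynomial.induction_on' with
  | add p q hp hq => rw [derivative_add, map_add, hp, hq]; simp; ring
  | monomial n a =>
    rw [derivative_monomial, intL_apply, Polynomial.sum_monomial_index _ _ (by simp)]
    cases n with
    | zero => simp
    | succ m =>
      simp
      have h : (1 + (m:ℚ)) ≠ 0 := by positivity
      field_simp


lemma natcast_add_one_mul_eq_smul (a : ℕ) (p : ℚ[X]) :
    ((a : ℚ[X]) + 1) * p = ((a : ℚ) + 1) • p := by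
  rw [Polynomial.smul_eq_C_mul]
  congr 1
  have e : ((a : ℚ) + 1) = ((a + 1 : ℕ) : ℚ) := by push_cast; ring
  rw [e, Polynomial.C_eq_natCast]
  push_cast
  ring

lemma intL_bernoulli (n : ℕ) : intL (Polynomial.bernoulli n) = if n = 0 then 1 else 0 := by
  have h := intL_deriv (Polynomial.bernoulli (n + 1))
  rw [derivative_bernoulli_add_one, natcast_add_one_mul_eq_smul, map_smul] at h
  simp only [Polynomial.bernoulli_eval_one, Polynomial.bernoulli_eval_zero, smul_eq_mul] at h
  rcases Nat.eq_zero_or_pos n with h0 | h1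
  · subst h0
    simp only [if_pos rfl]
    simp only [Nat.cast_zero, zero_add, one_mul] at h
    rw [h, bernoulli'_one, _root_.bernoulli_one]
    norm_num
  · rw [if_neg (by omega)]
    rw [bernoulli_eq_bernoulli'_of_ne_one (by omega : n + 1 ≠ 1), sub_self] at h
    have hne : ((n : ℚ) + 1) ≠ 0 := by positivity
    exact (mul_eq_zero.1 h).resolve_left hne

lemma J_val : ∀ m j : ℕ, 1 ≤ j → 1 ≤ m →
    intL (Polynomial.bernoulli j * Polynomial.bernoulli m) =
      (-1) ^ (m + 1) * ((j.factorial * m.factorial : ℚ) / (j + m).factorial) *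
        _root_.bernoulli (j + m) := by
  intro m
  induction m with
  | zero => intro j _ hm; omega
  | succ m ih =>
    intro j hj _
    have h := intL_deriv (Polynomial.bernoulli (j + 1) * Polynomial.bernoulli (m + 1))
    rw [derivative_mul, derivative_bernoulli_add_one, derivative_bernoulli_add_one] at h
    rw [mul_assoc, natcast_add_one_mul_eq_smul, mul_left_comm, natcast_add_one_mul_eq_smul,
      map_add, map_smul, map_smul] at h
    simp only [Polynomial.eval_mul, Polynomial.bernoulli_eval_one, Polynomial.bernoulli_eval_zero,
      smul_eq_mul] at h
    rcases Nat.eq_zero_or_pos m with hm0 | hm1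
    · subst hm0
      simp only [Nat.cast_zero, zero_add, Polynomial.bernoulli_zero, mul_one, one_mul] at h
      rw [intL_bernoulli, if_neg (by omega : ¬ j + 1 = 0), bernoulli'_one, _root_.bernoulli_one,
        bernoulli_eq_bernoulli'_of_ne_one (by omega : j + 1 ≠ 1)] at h
      have hE : (↑j + 1) * intL (Polynomial.bernoulli j * Polynomial.bernoulli 1) =
          bernoulli' (j + 1) := by linarith [h]
      have hne : ((j : ℚ) + 1) ≠ 0 := by positivity
      have hfac : ((j + (0 + 1)).factorial : ℚ) = (j + 1) * j.factorial := by
        rw [show j + (0 + 1) = j + 1 from rfl, Nat.factorial_succ]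
        push_cast; ring
      have hfne : (j.factorial : ℚ) ≠ 0 := by
        exact_mod_cast Nat.factorial_ne_zero j
      rw [show (0:ℕ) + 1 = 1 from rfl] at *
      rw [show j + 1 = j + 1 from rfl]
      have : intL (Polynomial.bernoulli j * Polynomial.bernoulli 1) = bernoulli' (j + 1) / (j + 1) := by
        field_simp at hE ⊢
        linarith [hE]
      rw [this, bernoulli_eq_bernoulli'_of_ne_one (by omega : j + 1 ≠ 1)]
      rw [hfac]
      rw [show Nat.factorial 1 = 1 from rfl]
      field_simp
      ring
    · -- inductive step
      have hE : (↑j + 1) * intL (Polynomial.bernoulli j * Polynomial.bernoulli (m + 1)) +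
          (↑m + 1) * intL (Polynomial.bernoulli (j + 1) * Polynomial.bernoulli m) = 0 := by
        rw [h, bernoulli_eq_bernoulli'_of_ne_one (by omega : j + 1 ≠ 1),
          bernoulli_eq_bernoulli'_of_ne_one (by omega : m + 1 ≠ 1), sub_self]
      rw [ih (j + 1) (by omega) hm1] at hE
      have hne : ((j : ℚ) + 1) ≠ 0 := by positivity
      have e1 : ((j + 1).factorial : ℚ) = (j + 1) * j.factorial := by
        rw [Nat.factorial_succ]; push_cast; ring
      have e2 : ((m + 1).factorial : ℚ) = (m + 1) * m.factorial := by
        rw [Nat.factorial_succ]; push_cast; ring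
      have e3 : j + 1 + m = j + (m + 1) := by omega
      have hfj : (j.factorial : ℚ) ≠ 0 := by exact_mod_cast Nat.factorial_ne_zero j
      have hfm : (m.factorial : ℚ) ≠ 0 := by exact_mod_cast Nat.factorial_ne_zero m
      have hfjm : (((j + (m + 1)).factorial : ℕ) : ℚ) ≠ 0 := by
        exact_mod_cast Nat.factorial_ne_zero _
      rw [e3, e1] at hE
      rw [e2]
      have hpow : ((-1 : ℚ)) ^ (m + 1 + 1) = -(-1 : ℚ) ^ (m + 1) := by
        rw [pow_succ]; ring
      rw [hpow]
      exact mul_left_cancel₀ hne (by linear_combination hE)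

lemma telescope_sum (d : ℕ) (hd : Even d) :
    ∑ k ∈ Finset.range (d + 1),
      ((-1 : ℚ)) ^ (d - k) * (((k + 1).factorial * (d + 1 - k).factorial : ℚ) / (d + 2).factorial) =
    2 / (d + 4) := by
  have key : ∀ k ∈ Finset.range (d + 1),
      ((-1 : ℚ)) ^ (d - k) * (((k + 1).factorial * (d + 1 - k).factorial : ℚ) / (d + 2).factorial) =
      (((d : ℚ) + 3) / ((d : ℚ) + 4)) *
        ((fun i => (-1 : ℚ) ^ i * (((i + 1).factorial * (d + 2 - i).factorial : ℚ) / (d + 3).factorial)) k -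
         (fun i => (-1 : ℚ) ^ i * (((i + 1).factorial * (d + 2 - i).factorial : ℚ) / (d + 3).factorial)) (k + 1)) := by
    intro k hk
    rw [Finset.mem_range] at hk
    simp only []
    obtain ⟨e, he⟩ : ∃ e, d - k = e := ⟨d - k, rfl⟩
    have h1 : d + 1 - k = e + 1 := by omega
    have h2 : d + 2 - k = e + 2 := by omega
    have h3 : d + 2 - (k + 1) = e + 1 := by omega
    have hsign : ((-1 : ℚ)) ^ (d - k) = (-1) ^ k := by
      have hd2 : d % 2 = 0 := Nat.even_iff.1 hd
      have hdk : (d - k) % 2 = k % 2 := by omega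
      rcases Nat.even_or_odd k with hke | hko
      · have : Even (d - k) := by
          rw [Nat.even_iff] at hke ⊢; omega
        rw [this.neg_one_pow, hke.neg_one_pow]
      · have : Odd (d - k) := by
          rw [Nat.odd_iff] at hko ⊢; omega
        rw [this.neg_one_pow, hko.neg_one_pow]
    rw [hsign, h1, h2, h3]
    have f1 : ((e + 2).factorial : ℚ) = (e + 2) * (e + 1).factorial := by
      rw [Nat.factorial_succ]; push_cast; ring
    have f2 : ((k + 2).factorial : ℚ) = (k + 2) * (k + 1).factorial := by
      rw [Nat.factorial_succ]; push_cast; ring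
    have f3 : ((d + 3).factorial : ℚ) = (d + 3) * (d + 2).factorial := by
      rw [Nat.factorial_succ]; push_cast; ring
    have hde : (d : ℚ) = (k : ℚ) + e := by
      have : d = k + e := by omega
      rw [this]; push_cast; ring
    have n1 : ((e + 1).factorial : ℚ) ≠ 0 := by exact_mod_cast Nat.factorial_ne_zero _
    have n2 : ((k + 1).factorial : ℚ) ≠ 0 := by exact_mod_cast Nat.factorial_ne_zero _
    have n3 : ((d + 2).factorial : ℚ) ≠ 0 := by exact_mod_cast Nat.factorial_ne_zero _
    have n4 : ((d : ℚ) + 3) ≠ 0 := by positivity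
    have n5 : ((d : ℚ) + 4) ≠ 0 := by positivity
    have hp : ((-1 : ℚ)) ^ (k + 1) = -(-1 : ℚ) ^ k := by rw [pow_succ]; ring
    rw [f1, f2, f3, hp, hde]
    field_simp
    ring
  rw [Finset.sum_congr rfl key, ← Finset.mul_sum, Finset.sum_range_sub']
  have h0 : d + 2 - 0 = d + 2 := by omega
  have h1 : d + 2 - (d + 1) = 1 := by omega
  rw [h0, h1]
  have hde : ((-1 : ℚ)) ^ (d + 1) = -1 := by
    have : Odd (d + 1) := Even.add_one hd
    exact this.neg_one_pow
  rw [hde]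
  have f3 : ((d + 3).factorial : ℚ) = (d + 3) * (d + 2).factorial := by
    rw [Nat.factorial_succ]; push_cast; ring
  have fd2 : ((d + 2).factorial : ℚ) ≠ 0 := by exact_mod_cast Nat.factorial_ne_zero _
  have n4 : ((d : ℚ) + 3) ≠ 0 := by positivity
  have n5 : ((d : ℚ) + 4) ≠ 0 := by positivity
  have g1 : ((0 + 1).factorial : ℚ) = 1 := by norm_num
  have g2 : ((d + 1 + 1).factorial : ℚ) = ((d + 2).factorial : ℚ) := by norm_num
  have g3 : ((Nat.factorial 1 : ℕ) : ℚ) = 1 := by norm_num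
  rw [g1, g2, f3]
  norm_num [Nat.factorial]
  field_simp
  ring

lemma intL_Tb (n : ℕ) (hn : 2 ≤ n) : intL (Tb n) = 2 * _root_.bernoulli n / ((n : ℚ) + 2) := by
  obtain ⟨d, rfl⟩ : ∃ d, n = d + 2 := ⟨n - 2, by omega⟩
  rw [Tb, map_sum, Finset.sum_range_succ, Finset.sum_range_succ']
  have t0 : intL (Polynomial.bernoulli 0 * Polynomial.bernoulli (d + 2 - 0)) = 0 := by
    rw [Polynomial.bernoulli_zero, one_mul, intL_bernoulli, if_neg (by omega)]
  have t1 : intL (Polynomial.bernoulli (d + 2) * Polynomial.bernoulli (d + 2 - (d + 2))) = 0 := by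
    rw [Nat.sub_self, Polynomial.bernoulli_zero, mul_one, intL_bernoulli, if_neg (by omega)]
  rw [t0, t1, add_zero, add_zero]
  have key : ∀ k ∈ Finset.range (d + 1),
      intL (Polynomial.bernoulli (k + 1) * Polynomial.bernoulli (d + 2 - (k + 1))) =
      ((-1 : ℚ)) ^ (d - k) * (((k + 1).factorial * (d + 1 - k).factorial : ℚ) / (d + 2).factorial) *
        _root_.bernoulli (d + 2) := by
    intro k hk
    rw [Finset.mem_range] at hk
    have h1 : d + 2 - (k + 1) = d + 1 - k := by omega
    rw [h1, J_val (d + 1 - k) (k + 1) (by omega) (by omega)]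
    have h2 : k + 1 + (d + 1 - k) = d + 2 := by omega
    rw [h2]
    congr 1
    have h3 : d + 1 - k + 1 = (d - k) + 2 := by omega
    rw [h3, pow_add]
    norm_num
  rw [Finset.sum_congr rfl key, ← Finset.sum_mul]
  rcases Nat.even_or_odd d with hd | hd
  · rw [telescope_sum d hd]
    push_cast
    ring
  · have hodd : Odd (d + 2) := by
      rw [Nat.odd_iff] at hd ⊢; omega
    rw [bernoulli_eq_bernoulli'_of_ne_one (by omega), bernoulli'_eq_zero_of_odd hodd (by omega)]
    simp

lemma intL_Rb (n : ℕ) (hn : 2 ≤ n) : intL (Rb n) = 2 * _root_.bernoulli n / ((n : ℚ) + 2) := by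
  rw [Rb, map_add, map_smul, map_smul, map_sum]
  simp_rw [map_smul, intL_bernoulli]
  rw [Finset.sum_eq_single 0 (fun l _ hl => by rw [if_neg hl, smul_zero])
    (fun h => absurd (Finset.mem_range.2 (by omega)) h)]
  rw [if_pos rfl, if_neg (by omega : ¬ n = 0)]
  simp only [Nat.choose_zero_right, Nat.cast_one, one_mul, Nat.sub_zero, smul_eq_mul,
    mul_one, smul_zero, add_zero]
  ring

lemma TbRb : ∀ n : ℕ, Tb n = Rb n := by
  have step : ∀ n : ℕ, 1 ≤ n → Tb n = Rb n → Tb (n + 1) = Rb (n + 1) := by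
    intro n hn ih
    have hd : derivative (Tb (n + 1) - Rb (n + 1)) = 0 := by
      rw [derivative_sub, derivT, derivR n hn, ih, sub_self]
    have hC := Polynomial.eq_C_of_derivative_eq_zero hd
    have h0 : intL (Tb (n + 1) - Rb (n + 1)) = 0 := by
      rw [map_sub, intL_Tb _ (by omega), intL_Rb _ (by omega), sub_self]
    rw [hC, intL_C] at h0
    have : Tb (n + 1) - Rb (n + 1) = 0 := by rw [hC, h0, map_zero]
    exact sub_eq_zero.1 this
  intro n
  induction n with
  | zero =>
    rw [Tb, Rb]
    simp
  | succ m ih =>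
    rcases Nat.eq_zero_or_pos m with h0 | h1
    · subst h0
      rw [Tb, Rb]
      simp [Finset.sum_range_succ, add_smul, one_smul]
    · exact step m h1 ih

theorem bernoulli_convolution (n : ℕ) :
    ∑ k ∈ Finset.range (n + 1),
        Polynomial.bernoulli k * Polynomial.bernoulli (n - k) =
      ((2 : ℚ) / (n + 2)) •
          ∑ l ∈ Finset.range (n - 1),
            (((n + 2).choose l : ℚ) * _root_.bernoulli (n - l)) • Polynomial.bernoulli l +
        ((n : ℚ) + 1) • Polynomial.bernoulli n := by
  exact TbRb n
end

section
/- For every natural number n, Σ_{k=0}^n E_k(x) E_{n-k}(x) = -(4/(n+2)) Σ_{l=0}^{n} C(n+2, l) E_{n-l+1} B_l(x), as an identity of polynomials, where E_m = E_m(0) denotes the Euler polynomial evaluated at 0 and B_l(x) is the Bernoulli polynomial. -/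
open Polynomial

/-- The Euler polynomials, defined by the generating function `2 e^{xt}/(e^t + 1)`,
via the equivalent recurrence `E_n(x) = x^n - (1/2) ∑_{k<n} C(n,k) E_k(x)`. -/
noncomputable def eulerPoly : ℕ → Polynomial ℚ
  | n =>
    Polynomial.X ^ n -
      Polynomial.C (1 / 2) *
        ∑ k ∈ (Finset.range n).attach,
          Polynomial.C (n.choose k.1 : ℚ) * eulerPoly k.1
  decreasing_by exact Finset.mem_range.mp k.2

lemma eulerPoly_def (n : ℕ) : eulerPoly n =
    Polynomial.X ^ n - Polynomial.C (1/2) * ∑ k ∈ Finset.range n,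
      Polynomial.C (n.choose k : ℚ) * eulerPoly k := by
  rw [eulerPoly]
  rw [← Finset.sum_attach (Finset.range n) (fun k => Polynomial.C (n.choose k : ℚ) * eulerPoly k)]

lemma eulerPoly_zero : eulerPoly 0 = 1 := by
  rw [eulerPoly_def]; simp

lemma eulerPoly_one : eulerPoly 1 = Polynomial.X - Polynomial.C (1/2) := by
  rw [eulerPoly_def]; simp [eulerPoly_zero]

lemma euler_deriv : ∀ n : ℕ, derivative (eulerPoly (n+1)) = ((n:ℚ)+1) • eulerPoly n := by
  intro n
  induction n using Nat.strong_induction_on with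
  | _ n ih =>
    rw [eulerPoly_def (n+1)]
    rw [derivative_sub, derivative_pow, derivative_X, derivative_mul, derivative_C,
      derivative_sum]
    simp only [zero_mul, mul_one, zero_add]
    have hsum : ∑ k ∈ Finset.range (n+1), derivative (Polynomial.C ((n+1).choose k : ℚ) * eulerPoly k)
        = ∑ j ∈ Finset.range n, (((n:ℚ)+1) * (n.choose j : ℚ)) • eulerPoly j := by
      rw [Finset.sum_range_succ']
      simp only [derivative_mul, derivative_C, zero_mul, zero_add]
      rw [eulerPoly_zero]
      simp only [derivative_one, mul_zero, add_zero]
      refine Finset.sum_congr rfl fun j hj => ?_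
      rw [ih j (Finset.mem_range.mp hj)]
      have h : (n+1).choose (j+1) * (j+1) = (n+1) * n.choose j :=
        (Nat.add_one_mul_choose_eq n j).symm
      rw [smul_eq_C_mul, smul_eq_C_mul, ← mul_assoc, ← C_mul]
      have h2 := congrArg (fun m : ℕ => C (m : ℚ) * eulerPoly j) h
      simp only [Nat.cast_mul, C_mul] at h2
      push_cast at h2
      simp only [C_mul]
      linear_combination h2
    rw [hsum]
    rw [eulerPoly_def n, smul_sub]
    congr 1
    · simp only [smul_eq_C_mul, Nat.add_sub_cancel]
      push_cast
      ring
    · simp only [smul_eq_C_mul, Finset.mul_sum, C_mul]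
      refine Finset.sum_congr rfl fun j hj => ?_
      ring

lemma euler_eval_one_add_zero : ∀ n : ℕ,
    (eulerPoly n).eval 1 + (eulerPoly n).eval 0 = if n = 0 then 2 else 0 := by
  intro n
  induction n using Nat.strong_induction_on with
  | _ n ih =>
    rw [eulerPoly_def n]
    simp only [eval_sub, eval_mul, eval_pow, eval_X, eval_C, eval_finset_sum, one_pow]
    have key : ∑ k ∈ Finset.range n, (n.choose k : ℚ) * (eulerPoly k).eval 1
        + ∑ k ∈ Finset.range n, (n.choose k : ℚ) * (eulerPoly k).eval 0
        = ∑ k ∈ Finset.range n, (n.choose k : ℚ) * ((eulerPoly k).eval 1 + (eulerPoly k).eval 0) := by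
      rw [← Finset.sum_add_distrib]; refine Finset.sum_congr rfl fun k _ => by ring
    rcases Nat.eq_zero_or_pos n with h0 | hpos
    · subst h0; norm_num
    · have : ∑ k ∈ Finset.range n, (n.choose k : ℚ) * ((eulerPoly k).eval 1 + (eulerPoly k).eval 0)
          = 2 := by
        rw [Finset.sum_eq_single 0]
        · simp [ih 0 hpos]
        · intro k hk hne
          rw [ih k (Finset.mem_range.mp hk), if_neg hne, mul_zero]
        · intro h; exact absurd (Finset.mem_range.mpr hpos) h
      have hzero : (0:ℚ)^n = 0 := by
        rw [zero_pow]; omega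
      rw [if_neg (by omega), hzero]
      linear_combination (-(1:ℚ)/2) * (key.trans this)

noncomputable def Lp (n : ℕ) : Polynomial ℚ :=
  ∑ k ∈ Finset.range (n+1), eulerPoly k * eulerPoly (n-k)

noncomputable def Rp (n : ℕ) : Polynomial ℚ :=
  (-(4:ℚ)/(n+2)) • ∑ l ∈ Finset.range (n+1),
    (((n+2).choose l : ℚ) * (eulerPoly (n-l+1)).eval 0) • Polynomial.bernoulli l

lemma Lp_deriv (n : ℕ) : derivative (Lp (n+1)) = ((n:ℚ)+2) • Lp n := by
  unfold Lp
  rw [derivative_sum]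
  simp only [derivative_mul]
  rw [Finset.sum_add_distrib]
  have hA : ∑ k ∈ Finset.range (n+2), derivative (eulerPoly k) * eulerPoly (n+1-k)
      = ∑ k ∈ Finset.range (n+1), ((k:ℚ)+1) • (eulerPoly k * eulerPoly (n-k)) := by
    rw [Finset.sum_range_succ']
    rw [eulerPoly_zero]
    simp only [derivative_one, zero_mul, add_zero]
    refine Finset.sum_congr rfl fun i hi => ?_
    rw [Nat.succ_sub_succ, euler_deriv i, smul_mul_assoc]
  have hB : ∑ k ∈ Finset.range (n+2), eulerPoly k * derivative (eulerPoly (n+1-k))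
      = ∑ k ∈ Finset.range (n+1), (((n-k : ℕ):ℚ)+1) • (eulerPoly k * eulerPoly (n-k)) := by
    rw [Finset.sum_range_succ]
    rw [Nat.sub_self, eulerPoly_zero]
    simp only [derivative_one, mul_zero, add_zero]
    refine Finset.sum_congr rfl fun k hk => ?_
    have hk' : k ≤ n := Nat.lt_succ_iff.mp (Finset.mem_range.mp hk)
    rw [show n + 1 - k = (n - k) + 1 by omega, euler_deriv (n-k), mul_smul_comm]
  rw [hA, hB, ← Finset.sum_add_distrib, Finset.smul_sum]
  refine Finset.sum_congr rfl fun k hk => ?_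
  have hk' : k ≤ n := Nat.lt_succ_iff.mp (Finset.mem_range.mp hk)
  rw [← add_smul]
  congr 1
  push_cast [Nat.cast_sub hk']
  ring

lemma Rp_deriv (n : ℕ) : derivative (Rp (n+1)) = ((n:ℚ)+2) • Rp n := by
  unfold Rp
  rw [derivative_smul, derivative_sum]
  have hL : ∑ l ∈ Finset.range (n+1+1), derivative
        (((((n+1)+2).choose l : ℚ) * (eulerPoly ((n+1)-l+1)).eval 0) • Polynomial.bernoulli l)
      = ∑ i ∈ Finset.range (n+1),
        ((((n:ℚ)+3) * (((n+2).choose i : ℚ) * (eulerPoly (n-i+1)).eval 0)) • Polynomial.bernoulli i) := by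
    rw [Finset.sum_range_succ']
    rw [derivative_smul, Polynomial.bernoulli_zero, derivative_one, smul_zero, add_zero]
    refine Finset.sum_congr rfl fun i hi => ?_
    rw [derivative_smul, Polynomial.derivative_bernoulli_add_one, Nat.succ_sub_succ]
    rw [show ((i:ℚ[X])+1) = Polynomial.C ((i:ℚ)+1) by rw [map_add, C_eq_natCast, map_one]]
    rw [← smul_eq_C_mul, smul_smul]
    congr 1
    have h : (n+3).choose (i+1) * (i+1) = (n+3) * (n+2).choose i :=
      (Nat.add_one_mul_choose_eq (n+2) i).symm
    have h2 : (((n+3).choose (i+1) * (i+1) : ℕ) : ℚ) = (((n+3) * (n+2).choose i : ℕ) : ℚ) := by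
      exact_mod_cast congrArg (fun m : ℕ => (m:ℚ)) h
    push_cast at h2
    linear_combination (eulerPoly (n-i+1)).eval 0 * h2
  rw [hL, Finset.smul_sum, Finset.smul_sum, Finset.smul_sum]
  refine Finset.sum_congr rfl fun i hi => ?_
  rw [smul_smul, smul_smul, smul_smul]
  congr 1
  have h2 : ((n:ℚ)+1+2) ≠ 0 := by positivity
  have h3 : ((n:ℚ)+2) ≠ 0 := by positivity
  field_simp
  push_cast
  ring

lemma Lp_eval (n : ℕ) :
    (Lp (n+1)).eval 1 - (Lp (n+1)).eval 0 = -4 * (eulerPoly (n+1)).eval 0 := by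
  have he1 : ∀ k : ℕ, (eulerPoly k).eval 1 = (if k = 0 then (2:ℚ) else 0) - (eulerPoly k).eval 0 :=
    fun k => eq_sub_of_add_eq (euler_eval_one_add_zero k)
  unfold Lp
  rw [eval_finset_sum, eval_finset_sum]
  simp only [eval_mul]
  have expand : ∑ k ∈ Finset.range (n+2), (eulerPoly k).eval 1 * (eulerPoly (n+1-k)).eval 1
      = (∑ k ∈ Finset.range (n+2), (if k = 0 then (2:ℚ) else 0) * (if n+1-k = 0 then (2:ℚ) else 0))
      - (∑ k ∈ Finset.range (n+2), (if k = 0 then (2:ℚ) else 0) * (eulerPoly (n+1-k)).eval 0)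
      - (∑ k ∈ Finset.range (n+2), (eulerPoly k).eval 0 * (if n+1-k = 0 then (2:ℚ) else 0))
      + ∑ k ∈ Finset.range (n+2), (eulerPoly k).eval 0 * (eulerPoly (n+1-k)).eval 0 := by
    rw [← Finset.sum_sub_distrib, ← Finset.sum_sub_distrib, ← Finset.sum_add_distrib]
    refine Finset.sum_congr rfl fun k hk => ?_
    rw [he1 k, he1 (n+1-k)]
    ring
  rw [expand]
  have h1 : ∑ k ∈ Finset.range (n+2),
      (if k = 0 then (2:ℚ) else 0) * (if n+1-k = 0 then (2:ℚ) else 0) = 0 :=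
    Finset.sum_eq_zero fun k hk => by
      rcases Nat.eq_zero_or_pos k with h|h
      · subst h; simp
      · rw [if_neg (by omega), zero_mul]
  have h2 : ∑ k ∈ Finset.range (n+2), (if k = 0 then (2:ℚ) else 0) * (eulerPoly (n+1-k)).eval 0
      = 2 * (eulerPoly (n+1)).eval 0 := by
    rw [Finset.sum_eq_single_of_mem 0 (by simp)]
    · simp
    · intro b hb hne; rw [if_neg hne, zero_mul]
  have h3 : ∑ k ∈ Finset.range (n+2), (eulerPoly k).eval 0 * (if n+1-k = 0 then (2:ℚ) else 0)
      = 2 * (eulerPoly (n+1)).eval 0 := by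
    rw [Finset.sum_eq_single_of_mem (n+1) (by simp)]
    · simp [mul_comm]
    · intro b hb hne
      rw [if_neg (by simp at hb; omega), mul_zero]
  rw [h1, h2, h3]
  ring

lemma Rp_eval (n : ℕ) :
    (Rp (n+1)).eval 1 - (Rp (n+1)).eval 0 = -4 * (eulerPoly (n+1)).eval 0 := by
  unfold Rp
  rw [eval_smul, eval_smul, eval_finset_sum, eval_finset_sum]
  simp only [eval_smul, Polynomial.bernoulli_eval_one, Polynomial.bernoulli_eval_zero]
  rw [smul_eq_mul, smul_eq_mul, ← mul_sub, ← Finset.sum_sub_distrib]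
  have key : ∑ l ∈ Finset.range (n+1+1),
      ((((n+1+2).choose l : ℚ) * (eulerPoly (n+1-l+1)).eval 0) • bernoulli' l
        - (((n+1+2).choose l : ℚ) * (eulerPoly (n+1-l+1)).eval 0) • _root_.bernoulli l)
      = ((n:ℚ)+3) * (eulerPoly (n+1)).eval 0 := by
    have hb : ∀ l : ℕ, (bernoulli' l - _root_.bernoulli l : ℚ) = if l = 1 then 1 else 0 := by
      intro l
      by_cases h : l = 1
      · subst h; rw [bernoulli'_one, _root_.bernoulli_one]; norm_num
      · rw [bernoulli_eq_bernoulli'_of_ne_one h, if_neg h]; ring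
    have : ∀ l ∈ Finset.range (n+2),
        ((((n+1+2).choose l : ℚ) * (eulerPoly (n+1-l+1)).eval 0) • bernoulli' l
          - (((n+1+2).choose l : ℚ) * (eulerPoly (n+1-l+1)).eval 0) • _root_.bernoulli l)
        = if l = 1 then (((n+3).choose 1 : ℚ) * (eulerPoly (n+1)).eval 0) else 0 := by
      intro l hl
      rw [smul_eq_mul, smul_eq_mul, ← mul_sub, hb l]
      by_cases h : l = 1
      · subst h; rw [if_pos rfl, if_pos rfl, mul_one]; push_cast; ring
      · rw [if_neg h, if_neg h, mul_zero]
    rw [Finset.sum_congr rfl this, Finset.sum_ite_eq' (Finset.range (n+2)) 1]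
    rw [if_pos (by simp)]
    norm_num
  rw [key]
  have h2 : ((n:ℚ)+1+2) ≠ 0 := by positivity
  field_simp
  push_cast
  ring

lemma Lp_eq_Rp : ∀ n : ℕ, Lp n = Rp n := by
  intro n
  induction n with
  | zero =>
      unfold Lp Rp
      simp [eulerPoly_zero, eulerPoly_one, Polynomial.bernoulli_zero]
      rw [smul_smul]
      norm_num
  | succ n ih =>
      have hd : derivative (Lp (n+1) - Rp (n+1)) = 0 := by
        rw [derivative_sub, Lp_deriv, Rp_deriv, ih, sub_self]
      have hC := eq_C_of_derivative_eq_zero hd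
      set c : ℚ := (Lp (n+1) - Rp (n+1)).coeff 0 with hc
      have hd2 : derivative (Lp (n+2) - Rp (n+2)) = Polynomial.C (((n:ℚ)+3) * c) := by
        rw [derivative_sub, Lp_deriv (n+1), Rp_deriv (n+1), ← smul_sub, hC, smul_C,
          smul_eq_mul]
        push_cast
        ring_nf
      have hd3 : derivative (Lp (n+2) - Rp (n+2) - Polynomial.C (((n:ℚ)+3) * c) * X) = 0 := by
        rw [derivative_sub, hd2, derivative_C_mul, derivative_X, mul_one, sub_self]
      have h4 := eq_C_of_derivative_eq_zero hd3
      have h5 := congrArg (eval 1) h4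
      have h6 := congrArg (eval 0) h4
      simp only [eval_sub, eval_mul, eval_C, eval_X, mul_one, mul_zero, eval_smul] at h5 h6
      have heval : (Lp (n+2)).eval 1 - (Lp (n+2)).eval 0
          - ((Rp (n+2)).eval 1 - (Rp (n+2)).eval 0) = 0 := by
        rw [Lp_eval (n+1), Rp_eval (n+1)]; ring
      have hc0 : ((n:ℚ)+3) * c = 0 := by linarith [h5, h6, heval]
      have : c = 0 := by
        have hne : ((n:ℚ)+3) ≠ 0 := by positivity
        exact (mul_eq_zero.mp hc0).resolve_left hne
      rw [← sub_eq_zero, hC, this, map_zero]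

theorem euler_convolution (n : ℕ) :
    ∑ k ∈ Finset.range (n + 1), eulerPoly k * eulerPoly (n - k) =
      (-(4 : ℚ) / (n + 2)) •
        ∑ l ∈ Finset.range (n + 1),
          (((n + 2).choose l : ℚ) * (eulerPoly (n - l + 1)).eval 0) •
            Polynomial.bernoulli l := by
  have h := Lp_eq_Rp n
  unfold Lp Rp at h
  exact h
end
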